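/- Let Γ be a finite simplicial graph, Γ̄ obtained from Γ by adding edges, and {G_i}, {G'_i} families of groups with |G_i| = |G'_i| for all i. Then K_{Γ,Γ̄} = ker(G_Γ → G_{Γ̄}) is isomorphic to K'_{Γ,Γ̄} = ker(G'_Γ → G'_{Γ̄}). -/

import Mathlib

open Monoid
open scoped commutatorElement

namespace GPaper

variable {ι : Type*}

/-- The relator subgroup of the graph product: normal closure of commutators of
elements of vertex groups at adjacent vertices. -/
def Rels (Γ : SimpleGraph ι) (G : ι → Type*) [∀ i, Group (G i)] : Subgroup (Monoid.CoprodI G) :=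
  Subgroup.normalClosure
    { x | ∃ (i j : ι) (g : G i) (h : G j), Γ.Adj i j ∧
          x = ⁅Monoid.CoprodI.of g, Monoid.CoprodI.of h⁆ }

instance (Γ : SimpleGraph ι) (G : ι → Type*) [∀ i, Group (G i)] : (Rels Γ G).Normal :=
  Subgroup.normalClosure_normal

/-- The graph product of the groups `G i` over the simplicial graph `Γ`. -/
abbrev GP (Γ : SimpleGraph ι) (G : ι → Type*) [∀ i, Group (G i)] :=
  Monoid.CoprodI G ⧸ Rels Γ G

/-- The canonical inclusion of a vertex group into the graph product. -/
def of (Γ : SimpleGraph ι) (G : ι → Type*) [∀ i, Group (G i)] (i : ι) : G i →* GP Γ G :=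
  (QuotientGroup.mk' (Rels Γ G)).comp Monoid.CoprodI.of

/-- The canonical homomorphism from the graph product to the direct product. -/
def proj [DecidableEq ι] (Γ : SimpleGraph ι) (G : ι → Type*) [∀ i, Group (G i)] :
    GP Γ G →* (∀ i, G i) :=
  QuotientGroup.lift (Rels Γ G) (Monoid.CoprodI.lift (fun i => MonoidHom.mulSingle G i)) (by
    intro x hx
    refine Subgroup.normalClosure_le_normal ?_ hx
    rintro y ⟨i, j, g, h, hadj, rfl⟩
    have hij : i ≠ j := hadj.ne
    simp only [SetLike.mem_coe, MonoidHom.mem_ker, map_commutatorElement,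
      Monoid.CoprodI.lift_of]
    rw [commutatorElement_eq_one_iff_commute]
    exact Pi.mulSingle_commute hij g h)

/-- The canonical epimorphism `G_Γ → G_Γ'` when `Γ'` is obtained from `Γ` by adding edges. -/
def mapGraph (Γ Γ' : SimpleGraph ι) (hΓ : Γ ≤ Γ') (G : ι → Type*) [∀ i, Group (G i)] :
    GP Γ G →* GP Γ' G :=
  QuotientGroup.lift (Rels Γ G) (QuotientGroup.mk' (Rels Γ' G)) (by
    intro x hx
    rw [QuotientGroup.ker_mk']
    refine Subgroup.normalClosure_le_normal ?_ hx
    rintro y ⟨i, j, g, h, hadj, rfl⟩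
    exact Subgroup.subset_normalClosure ⟨i, j, g, h, hΓ hadj, rfl⟩)

/-- The element of the graph product represented by a word (list of syllables). -/
def wordProd (Γ : SimpleGraph ι) (G : ι → Type*) [∀ i, Group (G i)]
    (w : List (Σ i, G i)) : GP Γ G :=
  (w.map fun s => of Γ G s.1 s.2).prod

/-- The image of a word in the direct product of the vertex groups. -/
def piProd [DecidableEq ι] (G : ι → Type*) [∀ i, Group (G i)]
    (w : List (Σ i, G i)) : ∀ i, G i :=
  (w.map fun s => Pi.mulSingle s.1 s.2).prod

/-- The ordered product of those syllables of a word that belong to `G i`. -/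
def sylProd [DecidableEq ι] (G : ι → Type*) [∀ i, Group (G i)]
    (w : List (Σ i, G i)) (i : ι) : G i :=
  (w.filterMap fun s => if h : s.1 = i then some (cast (congrArg G h) s.2) else none).prod

/-- The normal (syllable) length of an element of a graph product:
the minimal number of syllables in a word representing it. -/
noncomputable def nl (Γ : SimpleGraph ι) (G : ι → Type*) [∀ i, Group (G i)]
    (g : GP Γ G) : ℕ :=
  sInf { n | ∃ w : List (Σ i, G i), wordProd Γ G w = g ∧ w.length = n }

section Phi

open scoped Classical

variable [DecidableEq ι] {G G' : ι → Type*} [∀ i, Group (G i)] [∀ i, Group (G' i)]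

/-- One step of the recursive construction of `Φ`: the new syllable
`f(π(w))⁻¹ · f(π(w)s)` (dropped if trivial), where `g = π(w)`. -/
noncomputable def phiStep (f : ∀ i, G i → G' i) (g : ∀ i, G i) (s : Σ i, G i) : List (Σ i, G' i) :=
  if (f s.1 (g s.1))⁻¹ * f s.1 (g s.1 * s.2) = 1 then []
  else [⟨s.1, (f s.1 (g s.1))⁻¹ * f s.1 (g s.1 * s.2)⟩]

/-- Auxiliary recursion: process the word left to right, carrying the
image `g` of the prefix in the direct product. -/
noncomputable def phiAux (f : ∀ i, G i → G' i) : (∀ i, G i) → List (Σ i, G i) → List (Σ i, G' i)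
  | _, [] => []
  | g, s :: w => phiStep f g s ++ phiAux f (g * Pi.mulSingle s.1 s.2) w

/-- The word map `Φ : S* → S'*` induced by the set maps `f i : G i → G' i`. -/
noncomputable def phiWord (f : ∀ i, G i → G' i) (w : List (Σ i, G i)) : List (Σ i, G' i) :=
  phiAux f 1 w

end Phi


section Basic2



variable (Δ : SimpleGraph ι) (A : ι → Type*) [∀ i, Group (A i)]

theorem wordProd_nil : wordProd Δ A [] = 1 := rfl

theorem wordProd_cons (s : Σ i, A i) (w : List (Σ i, A i)) :
    wordProd Δ A (s :: w) = of Δ A s.1 s.2 * wordProd Δ A w := by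
  simp [wordProd]

theorem wordProd_append (u v : List (Σ i, A i)) :
    wordProd Δ A (u ++ v) = wordProd Δ A u * wordProd Δ A v := by
  simp [wordProd]

theorem wordProd_singleton (s : Σ i, A i) :
    wordProd Δ A [s] = of Δ A s.1 s.2 := by
  simp [wordProd]

theorem of_commute {i j : ι} (hadj : Δ.Adj i j) (g : A i) (h : A j) :
    Commute (of Δ A i g) (of Δ A j h) := by
  rw [← commutatorElement_eq_one_iff_commute]
  have : ⁅of Δ A i g, of Δ A j h⁆
      = (QuotientGroup.mk' (Rels Δ A)) ⁅Monoid.CoprodI.of g, Monoid.CoprodI.of h⁆ := by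
    simp [of, map_commutatorElement]
  rw [this]
  rw [show ((QuotientGroup.mk' (Rels Δ A)) ⁅Monoid.CoprodI.of g, Monoid.CoprodI.of h⁆ : GP Δ A)
      = (⁅Monoid.CoprodI.of g, Monoid.CoprodI.of h⁆ : Monoid.CoprodI A) from rfl]
  rw [QuotientGroup.eq_one_iff]
  exact Subgroup.subset_normalClosure ⟨i, j, g, h, hadj, rfl⟩

theorem wordProd_surjective : Function.Surjective (wordProd Δ A) := by
  intro x
  induction x using QuotientGroup.induction_on with
  | H y =>
    induction y using Monoid.CoprodI.induction_on with
    | one => exact ⟨[], rfl⟩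
    | of i m => exact ⟨[⟨i, m⟩], by simp [wordProd_singleton, of]⟩
    | mul a b ha hb =>
      obtain ⟨u, hu⟩ := ha
      obtain ⟨v, hv⟩ := hb
      exact ⟨u ++ v, by rw [wordProd_append, hu, hv]; rfl⟩

variable [DecidableEq ι]

theorem piProd_nil : piProd A [] = 1 := rfl

theorem piProd_cons (s : Σ i, A i) (w : List (Σ i, A i)) :
    piProd A (s :: w) = Pi.mulSingle s.1 s.2 * piProd A w := by
  simp [piProd]

theorem piProd_append (u v : List (Σ i, A i)) :
    piProd A (u ++ v) = piProd A u * piProd A v := by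
  simp [piProd]


end Basic2

section Congruence

variable (Δ : SimpleGraph ι) (A : ι → Type*) [∀ i, Group (A i)]

/-- One elementary move on words. -/
inductive Step : List (Σ i, A i) → List (Σ i, A i) → Prop
  | del (w₁ w₂ : List (Σ i, A i)) (i : ι) :
      Step (w₁ ++ ⟨i, 1⟩ :: w₂) (w₁ ++ w₂)
  | merge (w₁ w₂ : List (Σ i, A i)) (i : ι) (g h : A i) :
      Step (w₁ ++ ⟨i, g⟩ :: ⟨i, h⟩ :: w₂) (w₁ ++ ⟨i, g * h⟩ :: w₂)
  | swap (w₁ w₂ : List (Σ i, A i)) {i j : ι} (g : A i) (h : A j) (hadj : Δ.Adj i j) :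
      Step (w₁ ++ ⟨i, g⟩ :: ⟨j, h⟩ :: w₂) (w₁ ++ ⟨j, h⟩ :: ⟨i, g⟩ :: w₂)

/-- The congruence generated by the elementary moves. -/
def Rel : List (Σ i, A i) → List (Σ i, A i) → Prop := Relation.EqvGen (Step Δ A)

variable {Δ A}

theorem Rel.refl (w : List (Σ i, A i)) : Rel Δ A w w := Relation.EqvGen.refl w

theorem Rel.symm {w w' : List (Σ i, A i)} (h : Rel Δ A w w') : Rel Δ A w' w :=
  Relation.EqvGen.symm _ _ h

theorem Rel.trans {u v w : List (Σ i, A i)} (h : Rel Δ A u v) (h' : Rel Δ A v w) :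
    Rel Δ A u w := Relation.EqvGen.trans _ _ _ h h'

theorem Rel.of_step {w w' : List (Σ i, A i)} (h : Step Δ A w w') : Rel Δ A w w' :=
  Relation.EqvGen.rel _ _ h

theorem Step.append_left {w w' : List (Σ i, A i)} (u : List (Σ i, A i))
    (h : Step Δ A w w') : Step Δ A (u ++ w) (u ++ w') := by
  cases h with
  | del w₁ w₂ i => rw [← List.append_assoc, ← List.append_assoc]; exact Step.del _ _ _
  | merge w₁ w₂ i g g' => rw [← List.append_assoc, ← List.append_assoc]; exact Step.merge _ _ _ _ _
  | swap w₁ w₂ g g' hadj =>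
      rw [← List.append_assoc, ← List.append_assoc]; exact Step.swap _ _ _ _ hadj

theorem Step.append_right {w w' : List (Σ i, A i)} (u : List (Σ i, A i))
    (h : Step Δ A w w') : Step Δ A (w ++ u) (w' ++ u) := by
  cases h with
  | del w₁ w₂ i =>
      rw [List.append_assoc, List.cons_append]; rw [List.append_assoc]; exact Step.del _ _ _
  | merge w₁ w₂ i g g' =>
      rw [List.append_assoc, List.cons_append, List.cons_append, List.append_assoc,
        List.cons_append]
      exact Step.merge _ _ _ _ _
  | swap w₁ w₂ g g' hadj =>
      rw [List.append_assoc, List.cons_append, List.cons_append, List.append_assoc,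
        List.cons_append, List.cons_append]
      exact Step.swap _ _ _ _ hadj

theorem Rel.append_left (u : List (Σ i, A i)) {w w' : List (Σ i, A i)}
    (h : Rel Δ A w w') : Rel Δ A (u ++ w) (u ++ w') := by
  induction h with
  | rel a b hab => exact Rel.of_step (hab.append_left u)
  | refl a => exact Rel.refl _
  | symm a b _ ih => exact ih.symm
  | trans a b c _ _ ih₁ ih₂ => exact ih₁.trans ih₂

theorem Rel.append_right (u : List (Σ i, A i)) {w w' : List (Σ i, A i)}
    (h : Rel Δ A w w') : Rel Δ A (w ++ u) (w' ++ u) := by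
  induction h with
  | rel a b hab => exact Rel.of_step (hab.append_right u)
  | refl a => exact Rel.refl _
  | symm a b _ ih => exact ih.symm
  | trans a b c _ _ ih₁ ih₂ => exact ih₁.trans ih₂

theorem Rel.append {a b c d : List (Σ i, A i)} (h : Rel Δ A a b) (h' : Rel Δ A c d) :
    Rel Δ A (a ++ c) (b ++ d) :=
  (h.append_right c).trans (Rel.append_left b h')

variable (Δ A)

/-- The setoid of words modulo moves. -/
def wordSetoid : Setoid (List (Σ i, A i)) :=
  ⟨Rel Δ A, Relation.EqvGen.is_equivalence _⟩

/-- Words modulo moves. -/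
def Q : Type _ := Quotient (wordSetoid Δ A)

variable {Δ A}

def Q.mk (w : List (Σ i, A i)) : Q Δ A := Quotient.mk (wordSetoid Δ A) w

theorem Q.sound {w w' : List (Σ i, A i)} (h : Rel Δ A w w') : Q.mk (Δ := Δ) w = Q.mk w' :=
  Quotient.sound h

theorem Q.exact {w w' : List (Σ i, A i)} (h : Q.mk (Δ := Δ) (A := A) w = Q.mk w') :
    Rel Δ A w w' := Quotient.exact h

instance : Mul (Q Δ A) :=
  ⟨fun x y => Quotient.liftOn₂ x y (fun u v => Q.mk (u ++ v))
    (fun _ _ _ _ h h' => Q.sound (h.append h'))⟩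

instance : One (Q Δ A) := ⟨Q.mk []⟩

/-- The formal inverse of a word. -/
def invWord (w : List (Σ i, A i)) : List (Σ i, A i) :=
  (w.reverse.map fun s => ⟨s.1, s.2⁻¹⟩)

theorem invWord_cons (s : Σ i, A i) (w : List (Σ i, A i)) :
    invWord (s :: w) = invWord w ++ [⟨s.1, s.2⁻¹⟩] := by
  simp [invWord]

theorem Rel.invWord_append (w : List (Σ i, A i)) : Rel Δ A (invWord w ++ w) [] := by
  induction w with
  | nil => exact Rel.refl _
  | cons s w ih =>
      have h1 : Rel Δ A (invWord (s :: w) ++ s :: w) (invWord w ++ ⟨s.1, 1⟩ :: w) := by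
        rw [invWord_cons, List.append_assoc]
        refine Rel.append_left _ ?_
        have : ([⟨s.1, s.2⁻¹⟩] ++ s :: w : List (Σ i, A i))
            = [] ++ ⟨s.1, s.2⁻¹⟩ :: ⟨s.1, s.2⟩ :: w := by simp
        rw [this]
        have := Rel.of_step (Step.merge (Δ := Δ) [] w s.1 s.2⁻¹ s.2)
        simpa using this
      have h2 : Rel Δ A (invWord w ++ ⟨s.1, 1⟩ :: w) (invWord w ++ w) :=
        Rel.of_step (Step.del _ _ _)
      exact (h1.trans h2).trans ih

theorem Rel.invWord_of_rel {w w' : List (Σ i, A i)} (h : Rel Δ A w w') :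
    Rel Δ A (invWord w' ++ w) [] := by
  have h1 : Rel Δ A (invWord w' ++ w) (invWord w' ++ w') := Rel.append_left _ h
  exact h1.trans (Rel.invWord_append w')

theorem Rel.append_invWord (w : List (Σ i, A i)) : Rel Δ A (w ++ invWord w) [] := by
  induction w with
  | nil => exact Rel.refl _
  | cons s w ih =>
      have h0 : (s :: w ++ invWord (s :: w) : List (Σ i, A i))
          = [s] ++ ((w ++ invWord w) ++ [⟨s.1, s.2⁻¹⟩]) := by
        rw [invWord_cons]; simp
      rw [h0]
      have h1 : Rel Δ A ([s] ++ ((w ++ invWord w) ++ [⟨s.1, s.2⁻¹⟩]))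
          ([s] ++ ([] ++ [⟨s.1, s.2⁻¹⟩])) :=
        Rel.append_left _ (ih.append_right _)
      refine h1.trans ?_
      have h2 := Rel.of_step (Step.merge (Δ := Δ) [] [] s.1 s.2 s.2⁻¹)
      have h3 := Rel.of_step (Step.del (Δ := Δ) ([] : List (Σ i, A i)) [] s.1)
      simp only [List.nil_append, List.append_nil] at h2 h3 ⊢
      exact (by simpa [mul_inv_cancel] using h2 : Rel Δ A [s, ⟨s.1, s.2⁻¹⟩] [⟨s.1, 1⟩]).trans h3

theorem Rel.invWord_congr {w w' : List (Σ i, A i)} (h : Rel Δ A w w') :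
    Rel Δ A (invWord w) (invWord w') := by
  have h1 : Rel Δ A (invWord w) (invWord w ++ (w' ++ invWord w')) := by
    have := (Rel.append_invWord (Δ := Δ) w').symm
    have := Rel.append_left (invWord w) this
    simpa using this
  refine h1.trans ?_
  have h2 : Rel Δ A (invWord w ++ (w' ++ invWord w')) ((invWord w ++ w) ++ invWord w') := by
    rw [← List.append_assoc]
    exact Rel.append_right _ (Rel.append_left _ h.symm)
  refine h2.trans ?_
  have h3 := Rel.append_right (invWord w') (Rel.invWord_append (Δ := Δ) w)
  simpa using h3

instance : Inv (Q Δ A) :=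
  ⟨fun x => Quotient.liftOn x (fun w => Q.mk (invWord w))
    (fun _ _ h => Q.sound h.invWord_congr)⟩

instance : Group (Q Δ A) where
  mul_assoc a b c := by
    induction a using Quotient.ind
    induction b using Quotient.ind
    induction c using Quotient.ind
    exact Q.sound (by rw [List.append_assoc]; exact Rel.refl _)
  one_mul a := by
    induction a using Quotient.ind
    exact Q.sound (Rel.refl _)
  mul_one a := by
    induction a using Quotient.ind
    exact Q.sound (by rw [List.append_nil]; exact Rel.refl _)
  inv_mul_cancel a := by
    induction a using Quotient.ind
    exact Q.sound (Rel.invWord_append _)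

theorem Q.mk_mul (u v : List (Σ i, A i)) :
    (Q.mk (Δ := Δ) (u ++ v)) = Q.mk u * Q.mk v := rfl

variable (Δ A)

/-- Inclusion of a vertex group into `Q`. -/
def qOf (i : ι) : A i →* Q Δ A where
  toFun g := Q.mk [⟨i, g⟩]
  map_one' := Q.sound (by
    have := Rel.of_step (Step.del (Δ := Δ) ([] : List (Σ i, A i)) [] i)
    simpa using this)
  map_mul' g h := Q.sound (by
    have := (Rel.of_step (Step.merge (Δ := Δ) ([] : List (Σ i, A i)) [] i g h)).symm
    simpa using this)

/-- The canonical homomorphism from the graph product to words modulo moves. -/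
def toQ : GP Δ A →* Q Δ A :=
  QuotientGroup.lift (Rels Δ A) (Monoid.CoprodI.lift (qOf Δ A)) (by
    intro x hx
    refine Subgroup.normalClosure_le_normal ?_ hx
    rintro y ⟨i, j, g, h, hadj, rfl⟩
    simp only [SetLike.mem_coe, MonoidHom.mem_ker, map_commutatorElement,
      Monoid.CoprodI.lift_of]
    rw [commutatorElement_eq_one_iff_commute]
    show Commute (Q.mk [⟨i, g⟩]) (Q.mk [⟨j, h⟩])
    unfold Commute SemiconjBy
    rw [← Q.mk_mul, ← Q.mk_mul]
    refine Q.sound ?_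
    have := Rel.of_step (Step.swap (Δ := Δ) [] [] g h hadj)
    simpa using this)

variable {Δ A}

theorem toQ_wordProd (w : List (Σ i, A i)) : toQ Δ A (wordProd Δ A w) = Q.mk w := by
  induction w with
  | nil => rw [wordProd_nil, map_one]; rfl
  | cons s w ih =>
      rw [wordProd_cons, map_mul, ih]
      have h1 : toQ Δ A (of Δ A s.1 s.2) = Q.mk [⟨s.1, s.2⟩] := by
        show (Monoid.CoprodI.lift (qOf Δ A)) (Monoid.CoprodI.of s.2) = _
        rw [Monoid.CoprodI.lift_of]; rfl
      rw [h1, ← Q.mk_mul]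
      rfl

/-- Key theorem: words with equal graph-product values are connected by moves. -/
theorem rel_of_wordProd_eq {w w' : List (Σ i, A i)}
    (h : wordProd Δ A w = wordProd Δ A w') : Rel Δ A w w' := by
  apply Q.exact
  rw [← toQ_wordProd, ← toQ_wordProd, h]

end Congruence

section Proj

variable [DecidableEq ι] (Δ Δ' : SimpleGraph ι) (hΔ : Δ ≤ Δ') (A : ι → Type*) [∀ i, Group (A i)]

theorem proj_of (i : ι) (g : A i) : proj Δ A (of Δ A i g) = Pi.mulSingle i g := by
  show (Monoid.CoprodI.lift (fun i => MonoidHom.mulSingle A i)) (Monoid.CoprodI.of g) = _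
  rw [Monoid.CoprodI.lift_of]; rfl

theorem proj_wordProd (w : List (Σ i, A i)) : proj Δ A (wordProd Δ A w) = piProd A w := by
  induction w with
  | nil => rw [wordProd_nil, map_one, piProd_nil]
  | cons s w ih => rw [wordProd_cons, map_mul, ih, proj_of, piProd_cons]

theorem mapGraph_of (i : ι) (g : A i) :
    mapGraph Δ Δ' hΔ A (of Δ A i g) = of Δ' A i g := rfl

theorem mapGraph_wordProd (w : List (Σ i, A i)) :
    mapGraph Δ Δ' hΔ A (wordProd Δ A w) = wordProd Δ' A w := by
  induction w with
  | nil => rw [wordProd_nil, map_one, wordProd_nil]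
  | cons s w ih => rw [wordProd_cons, map_mul, ih, mapGraph_of, wordProd_cons]

theorem proj_eq_one_of_mem_ker {x : GP Δ A} (hx : mapGraph Δ Δ' hΔ A x = 1) :
    proj Δ A x = 1 := by
  obtain ⟨w, rfl⟩ := wordProd_surjective Δ A x
  rw [mapGraph_wordProd] at hx
  have := proj_wordProd Δ' A w
  rw [hx, map_one] at this
  rw [proj_wordProd, ← this]

end Proj

section Phi2

open scoped Classical

variable [DecidableEq ι] {G G' : ι → Type*} [∀ i, Group (G i)] [∀ i, Group (G' i)]
variable (Δ : SimpleGraph ι) (f : ∀ i, G i → G' i)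

theorem wordProd_phiStep (g : ∀ i, G i) (s : Σ i, G i) :
    wordProd Δ G' (phiStep f g s) = of Δ G' s.1 ((f s.1 (g s.1))⁻¹ * f s.1 (g s.1 * s.2)) := by
  unfold phiStep
  split_ifs with h
  · rw [h, map_one, wordProd_nil]
  · rw [wordProd_singleton]

theorem phiAux_append (g : ∀ i, G i) (u v : List (Σ i, G i)) :
    phiAux f g (u ++ v) = phiAux f g u ++ phiAux f (g * piProd G u) v := by
  induction u generalizing g with
  | nil => simp [phiAux, piProd_nil]
  | cons s u ih =>
      rw [List.cons_append]
      show phiStep f g s ++ phiAux f (g * Pi.mulSingle s.1 s.2) (u ++ v) = _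
      rw [ih]
      show _ = (phiStep f g s ++ phiAux f (g * Pi.mulSingle s.1 s.2) u)
          ++ phiAux f (g * piProd G (s :: u)) v
      rw [piProd_cons, List.append_assoc, ← mul_assoc]

theorem wordProd_phiAux_step {w w' : List (Σ i, G i)} (h : Step Δ G w w') (g : ∀ i, G i) :
    wordProd Δ G' (phiAux f g w) = wordProd Δ G' (phiAux f g w') := by
  cases h with
  | del w₁ w₂ i =>
      rw [phiAux_append, phiAux_append, wordProd_append, wordProd_append]
      congr 1
      obtain ⟨c, hc⟩ : ∃ c, g * piProd G w₁ = c := ⟨_, rfl⟩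
      rw [hc]
      show wordProd Δ G' (phiStep f c ⟨i, 1⟩ ++ phiAux f (c * Pi.mulSingle i (1 : G i)) w₂) = _
      rw [Pi.mulSingle_one, mul_one, wordProd_append, wordProd_phiStep]
      simp
  | merge w₁ w₂ i a b =>
      rw [phiAux_append, phiAux_append, wordProd_append, wordProd_append]
      congr 1
      obtain ⟨c, hc⟩ : ∃ c, g * piProd G w₁ = c := ⟨_, rfl⟩
      rw [hc]
      show wordProd Δ G' (phiStep f c ⟨i, a⟩ ++
          phiAux f (c * Pi.mulSingle i a) (⟨i, b⟩ :: w₂)) = wordProd Δ G'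
          (phiStep f c ⟨i, a * b⟩ ++ phiAux f (c * Pi.mulSingle i (a * b)) w₂)
      show wordProd Δ G' (phiStep f c ⟨i, a⟩ ++ (phiStep f (c * Pi.mulSingle i a) ⟨i, b⟩ ++
          phiAux f (c * Pi.mulSingle i a * Pi.mulSingle i b) w₂)) = _
      have hmerge : c * Pi.mulSingle i a * Pi.mulSingle i b = c * Pi.mulSingle i (a * b) := by
        rw [mul_assoc, ← Pi.mulSingle_mul]
      rw [hmerge]
      rw [wordProd_append, wordProd_append, wordProd_append, ← mul_assoc]
      congr 1
      rw [wordProd_phiStep, wordProd_phiStep, wordProd_phiStep, ← map_mul]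
      congr 1
      simp only [Pi.mul_apply, Pi.mulSingle_eq_same]
      rw [mul_assoc, mul_inv_cancel_left, mul_assoc]
  | swap w₁ w₂ a b hadj =>
      rename_i i j
      have hij : i ≠ j := hadj.ne
      rw [phiAux_append, phiAux_append, wordProd_append, wordProd_append]
      congr 1
      obtain ⟨c, hc⟩ : ∃ c, g * piProd G w₁ = c := ⟨_, rfl⟩
      rw [hc]
      show wordProd Δ G' (phiStep f c ⟨i, a⟩ ++ (phiStep f (c * Pi.mulSingle i a) ⟨j, b⟩ ++
          phiAux f (c * Pi.mulSingle i a * Pi.mulSingle j b) w₂))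
          = wordProd Δ G' (phiStep f c ⟨j, b⟩ ++ (phiStep f (c * Pi.mulSingle j b) ⟨i, a⟩ ++
          phiAux f (c * Pi.mulSingle j b * Pi.mulSingle i a) w₂))
      have hswap : c * Pi.mulSingle i a * Pi.mulSingle j b
          = c * Pi.mulSingle j b * Pi.mulSingle i a := by
        rw [mul_assoc, (Pi.mulSingle_commute hij a b).eq, ← mul_assoc]
      rw [hswap, wordProd_append, wordProd_append, wordProd_append, wordProd_append]
      rw [← mul_assoc, ← mul_assoc]
      congr 1
      rw [wordProd_phiStep, wordProd_phiStep, wordProd_phiStep, wordProd_phiStep]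
      have h1 : (c * Pi.mulSingle i a) j = c j := by
        simp [Pi.mulSingle_eq_of_ne (Ne.symm hij)]
      have h2 : (c * Pi.mulSingle j b) i = c i := by
        simp [Pi.mulSingle_eq_of_ne hij]
      rw [h1, h2]
      exact (of_commute Δ G' hadj _ _).eq

theorem wordProd_phiAux_rel {w w' : List (Σ i, G i)} (h : Rel Δ G w w') (g : ∀ i, G i) :
    wordProd Δ G' (phiAux f g w) = wordProd Δ G' (phiAux f g w') := by
  induction h with
  | rel a b hab => exact wordProd_phiAux_step Δ f hab g
  | refl a => rfl
  | symm a b _ ih => exact (ih).symm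
  | trans a b c _ _ ih₁ ih₂ => exact ih₁.trans ih₂

theorem piProd_singleton (s : Σ i, G' i) : piProd G' [s] = Pi.mulSingle s.1 s.2 := by
  simp [piProd]

/-- Remove the trivial syllables from a word. -/
noncomputable def cleanup : List (Σ i, G i) → List (Σ i, G i)
  | [] => []
  | s :: w => if s.2 = 1 then cleanup w else s :: cleanup w

theorem wordProd_cleanup (w : List (Σ i, G i)) :
    wordProd Δ G (cleanup w) = wordProd Δ G w := by
  induction w with
  | nil => rfl
  | cons s w ih =>
      show wordProd Δ G (if s.2 = 1 then cleanup w else s :: cleanup w) = _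
      split_ifs with h
      · rw [ih, wordProd_cons, h, map_one, one_mul]
      · rw [wordProd_cons, ih, wordProd_cons]

theorem carry_step (g : ∀ i, G i) (s : Σ i, G i) :
    (fun i => f i (g i)) * piProd G' (phiStep f g s)
      = fun i => f i ((g * Pi.mulSingle s.1 s.2) i) := by
  obtain ⟨k, a⟩ := s
  unfold phiStep
  dsimp only
  split_ifs with h
  · rw [piProd_nil, mul_one]
    funext i
    rcases eq_or_ne i k with rfl | hi
    · have hfe : f i (g i * a) = f i (g i) := by
        have := congrArg (fun z => f i (g i) * z) h
        simpa [mul_inv_cancel_left] using this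
      simp only [Pi.mul_apply, Pi.mulSingle_eq_same, hfe]
    · simp only [Pi.mul_apply, Pi.mulSingle_eq_of_ne hi, mul_one]
  · rw [piProd_singleton]
    funext i
    simp only [Pi.mul_apply]
    rcases eq_or_ne i k with rfl | hi
    · rw [Pi.mulSingle_eq_same, Pi.mulSingle_eq_same, mul_inv_cancel_left]
    · rw [Pi.mulSingle_eq_of_ne hi, Pi.mulSingle_eq_of_ne hi, mul_one, mul_one]

theorem phiAux_phiAux (f' : ∀ i, G' i → G i) (hf' : ∀ i x, f' i (f i x) = x)
    (w : List (Σ i, G i)) (g : ∀ i, G i) :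
    phiAux f' (fun i => f i (g i)) (phiAux f g w) = cleanup w := by
  induction w generalizing g with
  | nil => rfl
  | cons s w ih =>
      obtain ⟨k, a⟩ := s
      have hinj : Function.Injective (f k) := fun x y hxy => by
        rw [← hf' k x, hxy, hf' k y]
      show phiAux f' (fun i => f i (g i))
          (phiStep f g ⟨k, a⟩ ++ phiAux f (g * Pi.mulSingle k a) w)
        = cleanup (⟨k, a⟩ :: w)
      have hcleanup : cleanup (⟨k, a⟩ :: w)
          = if a = 1 then cleanup w else ⟨k, a⟩ :: cleanup w := rfl
      by_cases h1 : a = 1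
      · have hstep : phiStep f g ⟨k, a⟩ = [] := by
          unfold phiStep
          exact if_pos (by dsimp only; rw [h1, mul_one, inv_mul_cancel])
        have hg : g * Pi.mulSingle k a = g := by rw [h1, Pi.mulSingle_one, mul_one]
        rw [hstep, List.nil_append, hg, ih, hcleanup, if_pos h1]
      · have ht : (f k (g k))⁻¹ * f k (g k * a) ≠ 1 := by
          intro hc
          have hfe : f k (g k * a) = f k (g k) := by
            have := congrArg (fun z => f k (g k) * z) hc
            simpa [mul_inv_cancel_left] using this
          have := hinj hfe
          exact h1 (by simpa using this)
        have hstep : phiStep f g ⟨k, a⟩ = [⟨k, (f k (g k))⁻¹ * f k (g k * a)⟩] := by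
          unfold phiStep
          exact if_neg ht
        rw [hstep, List.singleton_append]
        show phiStep f' (fun i => f i (g i)) ⟨k, (f k (g k))⁻¹ * f k (g k * a)⟩ ++
            phiAux f' ((fun i => f i (g i)) *
              Pi.mulSingle k ((f k (g k))⁻¹ * f k (g k * a)))
              (phiAux f (g * Pi.mulSingle k a) w)
          = cleanup (⟨k, a⟩ :: w)
        have hcarry : (fun i => f i (g i)) *
            Pi.mulSingle k ((f k (g k))⁻¹ * f k (g k * a))
            = fun i => f i ((g * Pi.mulSingle k a) i) := by
          have hcs := carry_step f g ⟨k, a⟩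
          rw [hstep, piProd_singleton] at hcs
          exact hcs
        have hval : (f' k ((fun i => f i (g i)) k))⁻¹ *
            f' k ((fun i => f i (g i)) k * ((f k (g k))⁻¹ * f k (g k * a))) = a := by
          show (f' k (f k (g k)))⁻¹ * f' k (f k (g k) * ((f k (g k))⁻¹ * f k (g k * a))) = a
          rw [mul_inv_cancel_left, hf', hf', inv_mul_cancel_left]
        have hstep' : phiStep f' (fun i => f i (g i))
            ⟨k, (f k (g k))⁻¹ * f k (g k * a)⟩ = [⟨k, a⟩] := by
          unfold phiStep
          rw [if_neg (by dsimp only; rw [hval]; exact h1)]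
          dsimp only
          rw [hval]
        rw [hstep', List.singleton_append, hcarry, ih, hcleanup, if_neg h1]

theorem phiWord_phiWord (f' : ∀ i, G' i → G i) (hf' : ∀ i x, f' i (f i x) = x)
    (hf1 : ∀ i, f i 1 = 1) (w : List (Σ i, G i)) :
    wordProd Δ G (phiWord f' (phiWord f w)) = wordProd Δ G w := by
  have h1 : (1 : ∀ i, G' i) = fun i => f i ((1 : ∀ i, G i) i) :=
    funext fun i => (hf1 i).symm
  show wordProd Δ G (phiAux f' 1 (phiAux f 1 w)) = _
  rw [h1, phiAux_phiAux f f' hf', wordProd_cleanup]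

end Phi2

section Main

open scoped Classical

variable [DecidableEq ι] (Γ Γ' : SimpleGraph ι) (hΓ : Γ ≤ Γ')
  {G G' : ι → Type*} [∀ i, Group (G i)] [∀ i, Group (G' i)]

/-- A word representing a given element of the graph product. -/
noncomputable def repWord (x : GP Γ G) : List (Σ i, G i) :=
  (wordProd_surjective Γ G x).choose

theorem repWord_spec (x : GP Γ G) : wordProd Γ G (repWord Γ x) = x :=
  (wordProd_surjective Γ G x).choose_spec

variable (f : ∀ i, G i → G' i)

theorem phi_well_defined {w w' : List (Σ i, G i)}
    (h : wordProd Γ G w = wordProd Γ G w') :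
    wordProd Γ G' (phiWord f w) = wordProd Γ G' (phiWord f w') :=
  wordProd_phiAux_rel Γ f (rel_of_wordProd_eq h) 1

theorem phi_ker {w : List (Σ i, G i)} (h : wordProd Γ' G w = 1) :
    wordProd Γ' G' (phiWord f w) = 1 := by
  have h0 : wordProd Γ' G w = wordProd Γ' G ([] : List (Σ i, G i)) := by
    rw [h, wordProd_nil]
  have := wordProd_phiAux_rel Γ' f (rel_of_wordProd_eq h0) 1
  show wordProd Γ' G' (phiAux f 1 w) = 1
  rw [this]
  rfl

theorem mem_ker_iff (x : GP Γ G) :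
    x ∈ (mapGraph Γ Γ' hΓ G).ker ↔ wordProd Γ' G (repWord Γ x) = 1 := by
  rw [MonoidHom.mem_ker, ← repWord_spec Γ x, mapGraph_wordProd Γ Γ' hΓ G,
    repWord_spec]

/-- The map between the kernels induced by the family of set maps `f`. -/
noncomputable def kerMap : (mapGraph Γ Γ' hΓ G).ker → (mapGraph Γ Γ' hΓ G').ker :=
  fun k => ⟨wordProd Γ G' (phiWord f (repWord Γ k.1)), by
    rw [MonoidHom.mem_ker, mapGraph_wordProd Γ Γ' hΓ G']
    refine phi_ker Γ' f ?_
    have hk := k.2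
    rw [MonoidHom.mem_ker, ← repWord_spec Γ k.1, mapGraph_wordProd Γ Γ' hΓ G] at hk
    exact hk⟩

theorem kerMap_eq (k : (mapGraph Γ Γ' hΓ G).ker) (w : List (Σ i, G i))
    (hw : wordProd Γ G w = k.1) :
    (kerMap Γ Γ' hΓ f k).1 = wordProd Γ G' (phiWord f w) := by
  show wordProd Γ G' (phiWord f (repWord Γ k.1)) = _
  exact phi_well_defined Γ f (by rw [repWord_spec, hw])

theorem piProd_eq_one_of_ker (k : (mapGraph Γ Γ' hΓ G).ker) (w : List (Σ i, G i))
    (hw : wordProd Γ G w = k.1) : piProd G w = 1 := by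
  have h1 : mapGraph Γ Γ' hΓ G k.1 = 1 := k.2
  rw [← proj_wordProd Γ G w, hw]
  exact proj_eq_one_of_mem_ker Γ Γ' hΓ G h1

theorem phiWord_append_of_piProd_eq_one {u v : List (Σ i, G i)} (hu : piProd G u = 1) :
    phiWord f (u ++ v) = phiWord f u ++ phiWord f v := by
  show phiAux f 1 (u ++ v) = phiAux f 1 u ++ phiAux f 1 v
  rw [phiAux_append, hu, mul_one]

theorem kerMap_mul (k l : (mapGraph Γ Γ' hΓ G).ker) :
    (kerMap Γ Γ' hΓ f (k * l)).1 = (kerMap Γ Γ' hΓ f k).1 * (kerMap Γ Γ' hΓ f l).1 := by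
  have hw : wordProd Γ G (repWord Γ k.1 ++ repWord Γ l.1) = (k * l).1 := by
    rw [wordProd_append, repWord_spec, repWord_spec]; rfl
  rw [kerMap_eq Γ Γ' hΓ f (k * l) _ hw,
    phiWord_append_of_piProd_eq_one f
      (piProd_eq_one_of_ker Γ Γ' hΓ k (repWord Γ k.1) (repWord_spec Γ k.1)),
    wordProd_append]
  rfl

theorem kerMap_kerMap (f' : ∀ i, G' i → G i) (hf' : ∀ i x, f' i (f i x) = x)
    (hf1 : ∀ i, f i 1 = 1) (k : (mapGraph Γ Γ' hΓ G).ker) :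
    kerMap Γ Γ' hΓ f' (kerMap Γ Γ' hΓ f k) = k := by
  apply Subtype.ext
  have h1 : (kerMap Γ Γ' hΓ f k).1 = wordProd Γ G' (phiWord f (repWord Γ k.1)) :=
    kerMap_eq Γ Γ' hΓ f k (repWord Γ k.1) (repWord_spec Γ k.1)
  have h2 : (kerMap Γ Γ' hΓ f' (kerMap Γ Γ' hΓ f k)).1
      = wordProd Γ G (phiWord f' (phiWord f (repWord Γ k.1))) :=
    kerMap_eq Γ Γ' hΓ f' _ _ h1.symm
  rw [h2, phiWord_phiWord Γ f f' hf' hf1, repWord_spec]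

/-- The isomorphism of kernels induced by mutually inverse pointed families of set maps. -/
noncomputable def kerEquiv (f' : ∀ i, G' i → G i) (hf' : ∀ i x, f' i (f i x) = x)
    (hff' : ∀ i y, f i (f' i y) = y) (hf1 : ∀ i, f i 1 = 1) (hf'1 : ∀ i, f' i 1 = 1) :
    (mapGraph Γ Γ' hΓ G).ker ≃* (mapGraph Γ Γ' hΓ G').ker where
  toFun := kerMap Γ Γ' hΓ f
  invFun := kerMap Γ Γ' hΓ f'
  left_inv := kerMap_kerMap Γ Γ' hΓ f f' hf' hf1
  right_inv := kerMap_kerMap Γ Γ' hΓ f' f hff' hf'1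
  map_mul' k l := Subtype.ext (kerMap_mul Γ Γ' hΓ f k l)

end Main



/-- If `Γ̄` is obtained from `Γ` by adding edges and the vertex groups
of two families have the same cardinalities, then the kernels
`K_{Γ,Γ̄} = ker(G_Γ → G_{Γ̄})` and `K'_{Γ,Γ̄} = ker(G'_Γ → G'_{Γ̄})` are isomorphic. -/
theorem stmt18 {ι : Type*} [DecidableEq ι] [Fintype ι] (Γ Γ' : SimpleGraph ι)
    (hΓ : Γ ≤ Γ') (G G' : ι → Type*) [∀ i, Group (G i)] [∀ i, Group (G' i)]
    (hcard : ∀ i, Nonempty (G i ≃ G' i)) :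
    Nonempty ((mapGraph Γ Γ' hΓ G).ker ≃* (mapGraph Γ Γ' hΓ G').ker) := by
  have e : ∀ i, G i ≃ G' i := fun i => Classical.choice (hcard i)
  refine ⟨kerEquiv Γ Γ' hΓ (fun i x => e i x * (e i 1)⁻¹)
    (fun i y => (e i).symm (y * e i 1)) ?_ ?_ ?_ ?_⟩
  · intro i x
    rw [inv_mul_cancel_right, Equiv.symm_apply_apply]
  · intro i y
    rw [Equiv.apply_symm_apply, mul_inv_cancel_right]
  · intro i
    rw [mul_inv_cancel]
  · intro i
    rw [one_mul, Equiv.symm_apply_apply]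

end GPaper
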